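/- Let F be a field of characteristic zero and B an 8-dimensional F-vector space with basis e1, e2, e3, e4, f1, f2, f3, f4. Let μ be the trilinear alternating bracket on B whose only nonzero values on basis triples, up to skew-symmetry, are μ(e2,e3,e4) = e1, μ(e2,e3,f1) = −f4, μ(e2,e4,f1) = f3, and μ(e3,e4,f1) = −f2. Then μ satisfies the Filippov identity, so (B, μ) is a 3-Lie algebra. -/

import Mathlib

open scoped TensorProduct

theorem stmt16
    (F B : Type*) [Field F] [CharZero F] [AddCommGroup B] [Module F B]
    (b : Module.Basis (Fin 8) F B)
    (μ : B →ₗ[F] B →ₗ[F] B →ₗ[F] B)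
    (halt1 : ∀ x z : B, μ x x z = 0)
    (halt2 : ∀ x y : B, μ x y y = 0)
    (halt3 : ∀ x y : B, μ x y x = 0)
    (hv0 : μ (b 1) (b 2) (b 3) = b 0)
    (hv1 : μ (b 1) (b 2) (b 4) = -b 7)
    (hv2 : μ (b 1) (b 3) (b 4) = b 6)
    (hv3 : μ (b 2) (b 3) (b 4) = -b 5)
    (hzero : ∀ i j k : Fin 8, i < j → j < k →
      (i, j, k) ∉ ([(1, 2, 3), (1, 2, 4), (1, 3, 4), (2, 3, 4)] : List (Fin 8 × Fin 8 × Fin 8)) →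
      μ (b i) (b j) (b k) = 0)
    :
    ∀ x1 x2 x3 x4 x5 : B,
      μ x1 x2 (μ x3 x4 x5) =
        μ (μ x1 x2 x3) x4 x5 + μ x3 (μ x1 x2 x4) x5 +
          μ x3 x4 (μ x1 x2 x5) := by
  -- antisymmetry in adjacent arguments
  have swap12 : ∀ x y z : B, μ x y z = -μ y x z := by
    intro x y z
    have h := halt1 (x + y) z
    simp only [map_add, LinearMap.add_apply, halt1, zero_add, add_zero] at h
    exact eq_neg_of_add_eq_zero_right h
  have swap23 : ∀ x y z : B, μ x y z = -μ x z y := by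
    intro x y z
    have h := halt2 x (y + z)
    simp only [map_add, LinearMap.add_apply, halt2, zero_add, add_zero] at h
    exact eq_neg_of_add_eq_zero_right h
  have swap13 : ∀ x y z : B, μ x y z = -μ z y x := by
    intro x y z
    have h := halt3 (x + z) y
    simp only [map_add, LinearMap.add_apply, halt3, zero_add, add_zero] at h
    exact eq_neg_of_add_eq_zero_right h
  have hcyc : ∀ u y z : B, μ u y z = μ y z u := by
    intro u y z
    rw [swap12 u y z, swap23 y u z, neg_neg]
  -- generic sorting lemma
  have sortlem : ∀ (Q : Fin 8 → Prop) (P : B → Prop), P 0 → (∀ v, P v → P (-v)) →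
      (∀ i j k : Fin 8, i < j → j < k → (Q i ∨ Q j ∨ Q k) → P (μ (b i) (b j) (b k))) →
      ∀ i j k : Fin 8, (Q i ∨ Q j ∨ Q k) → P (μ (b i) (b j) (b k)) := by
    intro Q P h0 hneg hs i j k hc
    rcases lt_trichotomy i j with h1 | h1 | h1
    · rcases lt_trichotomy j k with h2 | h2 | h2
      · exact hs i j k h1 h2 hc
      · subst h2; rw [halt2]; exact h0
      · rcases lt_trichotomy i k with h3 | h3 | h3
        · rw [swap23]; exact hneg _ (hs i k j h3 h2 (by tauto))
        · subst h3; rw [halt3]; exact h0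
        · rw [swap13 _ _ (b k), swap23]
          exact hneg _ (hneg _ (hs k i j h3 h1 (by tauto)))
    · subst h1; rw [halt1]; exact h0
    · rcases lt_trichotomy i k with h2 | h2 | h2
      · rw [swap12]; exact hneg _ (hs j i k h1 h2 (by tauto))
      · subst h2; rw [halt3]; exact h0
      · rcases lt_trichotomy j k with h3 | h3 | h3
        · rw [swap12, swap23]
          exact hneg _ (hneg _ (hs j k i h3 h2 (by tauto)))
        · subst h3; rw [halt2]; exact h0
        · rw [swap13]; exact hneg _ (hs k j i h3 h1 (by tauto))
  -- any basis triple with an index outside {1,2,3,4} vanishes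
  have hA : ∀ i j k : Fin 8, ((i = 0 ∨ 5 ≤ i) ∨ (j = 0 ∨ 5 ≤ j) ∨ (k = 0 ∨ 5 ≤ k)) →
      μ (b i) (b j) (b k) = 0 := by
    refine sortlem (fun i => i = 0 ∨ 5 ≤ i) (fun v => v = 0) rfl (fun v hv => by rw [hv, neg_zero]) ?_
    intro i j k hij hjk hc
    apply hzero i j k hij hjk
    intro hm
    simp only [List.mem_cons, List.not_mem_nil, or_false, Prod.mk.injEq] at hm
    rcases hm with ⟨h1, h2, h3⟩ | ⟨h1, h2, h3⟩ | ⟨h1, h2, h3⟩ | ⟨h1, h2, h3⟩ <;>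
      subst h1 <;> subst h2 <;> subst h3 <;> revert hc <;> decide
  -- bilinear extension
  have hext2 : ∀ v : B, (∀ i j : Fin 8, μ (b i) (b j) v = 0) → ∀ x y : B, μ x y v = 0 := by
    intro v hv x y
    conv_lhs => rw [← b.sum_repr x, ← b.sum_repr y]
    simp only [map_sum, LinearMap.sum_apply, map_smul, LinearMap.smul_apply, hv, smul_zero,
      Finset.sum_const_zero]
  have hcl : ∀ l : Fin 8, (l = 0 ∨ 5 ≤ l) → ∀ x y : B, μ x y (b l) = 0 := by
    intro l hl
    exact hext2 (b l) (fun i j => hA i j l (by tauto))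
  -- μ x y (μ (b i) (b j) (b k)) = 0 for all basis triples
  have htab : ∀ i j k : Fin 8, ∀ x y : B, μ x y (μ (b i) (b j) (b k)) = 0 := by
    intro i j k
    refine sortlem (fun _ => True) (fun v => ∀ x y : B, μ x y v = 0) (by simp)
      (fun v hv x y => by rw [map_neg, hv, neg_zero]) ?_ i j k (Or.inl trivial)
    intro i j k hij hjk _
    by_cases hm : (i, j, k) ∈ ([(1, 2, 3), (1, 2, 4), (1, 3, 4), (2, 3, 4)] :
        List (Fin 8 × Fin 8 × Fin 8))
    · simp only [List.mem_cons, List.not_mem_nil, or_false, Prod.mk.injEq] at hm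
      rcases hm with ⟨h1, h2, h3⟩ | ⟨h1, h2, h3⟩ | ⟨h1, h2, h3⟩ | ⟨h1, h2, h3⟩ <;>
        subst h1 <;> subst h2 <;> subst h3 <;> intro x y
      · rw [hv0]; exact hcl 0 (Or.inl rfl) x y
      · rw [hv1, map_neg, hcl 7 (Or.inr (by decide)) x y, neg_zero]
      · rw [hv2]; exact hcl 6 (Or.inr (by decide)) x y
      · rw [hv3, map_neg, hcl 5 (Or.inr (by decide)) x y, neg_zero]
    · rw [hzero i j k hij hjk hm]; simp
  -- nested brackets vanish
  have hmain : ∀ x y z w v : B, μ x y (μ z w v) = 0 := by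
    intro x y z w v
    conv_lhs => rw [← b.sum_repr z, ← b.sum_repr w, ← b.sum_repr v]
    simp only [map_sum, LinearMap.sum_apply, map_smul, LinearMap.smul_apply, htab, smul_zero,
      Finset.sum_const_zero]
  intro x1 x2 x3 x4 x5
  rw [hmain, hcyc (μ x1 x2 x3) x4 x5, hmain, swap23 x3 (μ x1 x2 x4) x5, hmain, hmain]
  simp
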